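/- Every two subtrees of the succinct (n,h)-universal tree rooted at the same depth h−j are comparable under embeddability; that is, for each 0 ≤ j ≤ h, the set T_j of distinct depth-(h−j) subtrees of the succinct (n,h)-universal tree forms a chain under ⊑. Concretely, if r₁, r₂ are vertices at depth h−j with bit-lengths |r₁| ≥ |r₂|, then the subtree rooted at r₁ embeds into the subtree rooted at r₂. -/
import Mathlib


/-- Binary strings. -/
abbrev BStr := List Bool

/-- The linear order on finite binary strings used for succinct universal trees:
`0s < ε < 1s'` and `bs < bs' ↔ s < s'`. -/
def slt : BStr → BStr → Prop
  | [], [] => False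
  | false :: _, [] => True
  | true :: _, [] => False
  | [], true :: _ => True
  | [], false :: _ => False
  | false :: _, true :: _ => True
  | true :: _, false :: _ => False
  | false :: s, false :: t => slt s t
  | true :: s, true :: t => slt s t

/-- Total number of bits in a tuple of binary strings. -/
def bits (v : List BStr) : ℕ := (v.map List.length).sum

/-- Vertices of the succinct tree `T_{b,j}`: tuples of at most `j` binary strings
with at most `b` bits in total.  (Its leaves are the `j`-tuples with `≤ b` bits.) -/
def SVerts (b j : ℕ) : Set (List BStr) := {v | v.length ≤ j ∧ bits v ≤ b}

/-- Edges of `T_{b,j}` (child relation). -/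
def SEdge (b j : ℕ) (u v : List BStr) : Prop :=
  u ∈ SVerts b j ∧ v ∈ SVerts b j ∧ ∃ a : BStr, v = u ++ [a]

/-- Leaves of `T_{b,j}`: vertices with no child. -/
def SLeaf (b j : ℕ) (v : List BStr) : Prop :=
  v ∈ SVerts b j ∧ ∀ a : BStr, v ++ [a] ∉ SVerts b j

/-- `T_{b,j} ⊑ T_{b',j'}`: an injective, order-preserving homomorphism mapping
edges to edges and leaves to leaves. -/
def SEmbeds (b j b' j' : ℕ) : Prop :=
  ∃ f : List BStr → List BStr,
    (∀ v ∈ SVerts b j, f v ∈ SVerts b' j') ∧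
    Set.InjOn f (SVerts b j) ∧
    (∀ u v, SEdge b j u v → SEdge b' j' (f u) (f v)) ∧
    (∀ u ∈ SVerts b j, ∀ v ∈ SVerts b j, List.Lex slt u v → List.Lex slt (f u) (f v)) ∧
    (∀ v, SLeaf b j v → SLeaf b' j' (f v))

/-- In the succinct `(n,h)`-universal tree (whose vertices are tuples of
binary strings with at most `⌊log n⌋` bits in total), any two subtrees rooted at the same
depth `h - j` are comparable under embeddability.  Concretely, if `r₁, r₂` are vertices at
depth `h - j` with `|r₁| ≥ |r₂|` bits, then the subtree rooted at `r₁` (a copy of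
`T_{⌊log n⌋ - |r₁|, j}`) embeds into the subtree rooted at `r₂` (a copy of
`T_{⌊log n⌋ - |r₂|, j}`); hence the set of distinct depth-`(h-j)` subtrees is a chain. -/
lemma sembeds_mono {b b' j : ℕ} (hb : b ≤ b') : SEmbeds b j b' j := by
  refine ⟨id, ?_, ?_, ?_, ?_, ?_⟩
  · rintro v ⟨hl, hbits⟩; exact ⟨hl, hbits.trans hb⟩
  · exact fun x _ y _ h => h
  · rintro u v ⟨⟨hul, hub⟩, ⟨hvl, hvb⟩, a, ha⟩
    exact ⟨⟨hul, hub.trans hb⟩, ⟨hvl, hvb.trans hb⟩, a, ha⟩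
  · exact fun u _ v _ h => h
  · rintro v ⟨⟨hvl, hvb⟩, hleaf⟩
    refine ⟨⟨hvl, hvb.trans hb⟩, fun a ⟨hal, _⟩ => ?_⟩
    have h0 := hleaf []
    have : bits (v ++ [[]]) = bits v := by simp [bits]
    have hlen : ¬ (v ++ [[]]).length ≤ j := fun hle => h0 ⟨hle, this ▸ hvb⟩
    exact hlen (by simpa using hal)

theorem stmt_9 (n h j : ℕ) (hj : j ≤ h) (r₁ r₂ : List BStr)
    (h₁ : r₁ ∈ SVerts (Nat.log 2 n) h) (h₂ : r₂ ∈ SVerts (Nat.log 2 n) h)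
    (hd₁ : r₁.length = h - j) (hd₂ : r₂.length = h - j)
    (hbits : bits r₂ ≤ bits r₁) :
    SEmbeds (Nat.log 2 n - bits r₁) j (Nat.log 2 n - bits r₂) j ∧
    (∀ b₁ b₂ : ℕ, SEmbeds b₁ j b₂ j ∨ SEmbeds b₂ j b₁ j) := by
  refine ⟨sembeds_mono (Nat.sub_le_sub_left hbits _), fun b₁ b₂ => ?_⟩
  rcases le_total b₁ b₂ with h | h
  · exact Or.inl (sembeds_mono h)
  · exact Or.inr (sembeds_mono h)
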